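/- Let σ: ℕ → ℕ be a bijection and let T = T_σ be the associated permutation operator on H. Then P(T) is closed in H if and only if sup{card([m]) : m ∈ ℕ, [m] is finite} < ∞. -/

import Mathlib

/-- The orbit `[n] = {σ^k n : k ∈ ℤ}` of `n` under the bijection `σ : ℕ → ℕ`. -/
def permOrbit (σ : Equiv.Perm ℕ) (n : ℕ) : Set ℕ := {m : ℕ | ∃ z : ℤ, (σ ^ z) n = m}

open Function Set
open scoped ENNReal

section OrbitLemmas

lemma orbit_eq_image (σ : Equiv.Perm ℕ) (n : ℕ) (h : n ∈ periodicPts ⇑σ) :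
    permOrbit σ n = (fun k : ℕ => (σ ^ k) n) '' Iio (minimalPeriod ⇑σ n) := by
  set p := minimalPeriod ⇑σ n with hp
  have hppos : 0 < p := minimalPeriod_pos_of_mem_periodicPts h
  have hfix : (σ ^ p) n = n := isPeriodicPt_minimalPeriod ⇑σ n
  ext m
  constructor
  · rintro ⟨z, rfl⟩
    refine ⟨(z % (p : ℤ)).toNat, ?_, ?_⟩
    · have h1 : z % (p : ℤ) < (p : ℤ) := Int.emod_lt_of_pos z (by exact_mod_cast hppos)
      simp only [Set.mem_Iio]
      omega
    · have h0 : 0 ≤ z % (p : ℤ) := Int.emod_nonneg z (by positivity)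
      have hz : z = (p : ℤ) * (z / (p : ℤ)) + z % (p : ℤ) := (Int.mul_ediv_add_emod z p).symm
      have h2 : (σ ^ z) n = (σ ^ (z % (p : ℤ))) ((σ ^ ((p : ℤ) * (z / (p : ℤ)))) n) := by
        rw [← Equiv.Perm.mul_apply, ← zpow_add, add_comm, ← hz]
      rw [h2]
      have hfixz : (σ ^ ((p : ℤ) * (z / (p : ℤ)))) n = n := by
        rw [zpow_mul, zpow_natCast]
        exact Equiv.Perm.zpow_apply_eq_self_of_apply_eq_self hfix _
      rw [hfixz]
      show (σ ^ (z % (p:ℤ)).toNat) n = (σ ^ (z % (p:ℤ))) n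
      rw [← zpow_natCast σ (z % (p:ℤ)).toNat, Int.toNat_of_nonneg h0]
  · rintro ⟨k, _, rfl⟩
    exact ⟨(k : ℤ), by rw [zpow_natCast]⟩

lemma ncard_orbit (σ : Equiv.Perm ℕ) (n : ℕ) (h : n ∈ periodicPts ⇑σ) :
    (permOrbit σ n).ncard = minimalPeriod ⇑σ n := by
  rw [orbit_eq_image σ n h]
  rw [Set.ncard_image_of_injOn]
  · rw [← Finset.coe_range, Set.ncard_coe_finset, Finset.card_range]
  · exact Function.iterate_injOn_Iio_minimalPeriod

lemma injective_pow_apply {σ : Equiv.Perm ℕ} {k m : ℕ} (hm : 0 < m) (h : k ∉ periodicPts ⇑σ) :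
    Function.Injective (fun j : ℕ => ((σ ^ m) ^ j) k) := by
  have key : ∀ i j : ℕ, i < j → ((σ ^ m) ^ i) k = ((σ ^ m) ^ j) k → False := by
    intro i j hij heq
    have h2 : ((σ ^ m) ^ i) (((σ ^ m) ^ (j - i)) k) = ((σ ^ m) ^ i) k := by
      rw [← Equiv.Perm.mul_apply, ← pow_add]
      rw [Nat.add_sub_cancel' hij.le] at *
      exact heq.symm
    have h3 : ((σ ^ m) ^ (j - i)) k = k := (Equiv.injective _) h2
    apply h
    refine mk_mem_periodicPts (n := m * (j - i)) (Nat.mul_pos hm (by omega)) ?_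
    show (⇑σ)^[m * (j-i)] k = k
    rw [Equiv.Perm.iterate_eq_pow, pow_mul]
    exact h3
  intro i j hij
  by_contra hne
  rcases lt_trichotomy i j with h' | h' | h'
  · exact key i j h' hij
  · exact hne h'
  · exact key j i h' hij.symm

lemma orbit_finite_iff (σ : Equiv.Perm ℕ) (n : ℕ) :
    (permOrbit σ n).Finite ↔ n ∈ periodicPts ⇑σ := by
  constructor
  · intro hfin
    by_contra h
    have hinj : Function.Injective (fun j : ℕ => ((σ ^ 1) ^ j) n) := injective_pow_apply one_pos h
    have hinf : (Set.range (fun j : ℕ => ((σ ^ 1) ^ j) n)).Infinite :=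
      Set.infinite_range_of_injective hinj
    refine hinf (hfin.subset ?_)
    rintro _ ⟨j, rfl⟩
    exact ⟨(j : ℤ), by simp [zpow_natCast, pow_one]⟩
  · intro h
    rw [orbit_eq_image σ n h]
    exact (Set.finite_Iio _).image _

lemma orbit_eq_of_mem {σ : Equiv.Perm ℕ} {a b : ℕ} (h : a ∈ permOrbit σ b) :
    permOrbit σ a = permOrbit σ b := by
  obtain ⟨z, rfl⟩ := h
  ext c
  constructor
  · rintro ⟨w, rfl⟩
    exact ⟨w + z, by rw [zpow_add, Equiv.Perm.mul_apply]⟩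
  · rintro ⟨w, rfl⟩
    refine ⟨w - z, ?_⟩
    rw [← Equiv.Perm.mul_apply, ← zpow_add, sub_add_cancel]

lemma self_mem_orbit (σ : Equiv.Perm ℕ) (n : ℕ) : n ∈ permOrbit σ n := ⟨0, by simp⟩

lemma not_periodicPts_pow_apply {σ : Equiv.Perm ℕ} {k : ℕ} (N : ℕ) (h : k ∉ periodicPts ⇑σ) :
    (σ ^ N) k ∉ periodicPts ⇑σ := by
  rintro ⟨j, hj, hfix⟩
  apply h
  refine ⟨j, hj, ?_⟩
  have hfix' : (σ ^ j) ((σ ^ N) k) = (σ ^ N) k := hfix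
  have h2 : (σ ^ N) ((σ ^ j) k) = (σ ^ N) k := by
    rw [← Equiv.Perm.mul_apply, ← pow_add, add_comm N j, pow_add, Equiv.Perm.mul_apply]
    exact hfix'
  exact (Equiv.injective _) h2

end OrbitLemmas

local notation "⟪" x ", " y "⟫" => @inner ℂ _ _ x y

section Hilb
variable {H : Type*} [NormedAddCommGroup H] [InnerProductSpace ℂ H] [CompleteSpace H]
  (e : HilbertBasis ℕ ℂ H) (σ : Equiv.Perm ℕ) (T : H →L[ℂ] H)
  (hT : ∀ n, T (e n) = e (σ n))
include hT

lemma inner_T_apply (n : ℕ) (x : H) : ⟪e n, T x⟫ = ⟪e (σ⁻¹ n), x⟫ := by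
  have key : (innerSL ℂ (e n)).comp T = innerSL ℂ (e (σ⁻¹ n)) := by
    apply ContinuousLinearMap.ext_on
      (Submodule.dense_iff_topologicalClosure_eq_top.mpr e.dense_span)
    rintro _ ⟨k, rfl⟩
    simp only [ContinuousLinearMap.comp_apply, innerSL_apply_apply, hT k,
      orthonormal_iff_ite.mp e.orthonormal]
    have h1 : (n = σ k) ↔ (σ⁻¹ n = k) := by
      constructor
      · rintro rfl; exact σ.symm_apply_apply k
      · rintro rfl; exact (σ.apply_symm_apply n).symm
    exact if_congr h1 rfl rfl
  exact congrArg (fun f => f x) (congrArg (fun (f : H →L[ℂ] ℂ) => ⇑f) key)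

lemma inner_pow_T (m : ℕ) (x : H) (n : ℕ) :
    ⟪e n, (T ^ m) x⟫ = ⟪e ((σ⁻¹ ^ m) n), x⟫ := by
  induction m generalizing x with
  | zero => simp
  | succ m ih =>
    rw [pow_succ, ContinuousLinearMap.mul_apply, ih (T x), inner_T_apply e σ T hT]
    congr 2
    rw [pow_succ' σ⁻¹ m, Equiv.Perm.mul_apply]

omit hT in
lemma eq_iff_inner (x y : H) : x = y ↔ ∀ n, ⟪e n, x⟫ = ⟪e n, y⟫ := by
  refine ⟨fun h n => by rw [h], fun h => ?_⟩
  apply e.repr.injective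
  apply lp.ext
  funext n
  rw [e.repr_apply_apply, e.repr_apply_apply]
  exact h n

lemma periodic_iff (m : ℕ) (x : H) :
    (T ^ m) x = x ↔ ∀ n, ⟪e ((σ ^ m) n), x⟫ = ⟪e n, x⟫ := by
  rw [eq_iff_inner e]
  have hinv : ∀ n : ℕ, (σ⁻¹ ^ m) ((σ ^ m) n) = n := by
    intro n; rw [inv_pow]; exact (σ ^ m).symm_apply_apply n
  have hinv2 : ∀ n : ℕ, (σ ^ m) ((σ⁻¹ ^ m) n) = n := by
    intro n; rw [inv_pow]; exact (σ ^ m).apply_symm_apply n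
  constructor
  · intro h n
    have h2 := h ((σ ^ m) n)
    rw [inner_pow_T e σ T hT, hinv n] at h2
    exact h2.symm
  · intro h n
    rw [inner_pow_T e σ T hT]
    have h2 := h ((σ⁻¹ ^ m) n)
    rw [hinv2 n] at h2
    exact h2.symm

omit hT in
lemma summable_sq (x : H) : Summable fun n => ‖⟪e n, x⟫‖ ^ (2 : ℝ≥0∞).toReal := by
  have h : Memℓp (⇑(e.repr x)) 2 := lp.memℓp (e.repr x)
  have h2 := h.summable (by norm_num)
  convert h2 using 2 with n
  rw [e.repr_apply_apply]

omit hT in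
lemma const_coeff_zero (x : H) {g : ℕ → ℕ} (hg : Function.Injective g) {c : ℂ}
    (hc : ∀ j, ⟪e (g j), x⟫ = c) : c = 0 := by
  have hs : Summable ((fun n => ‖⟪e n, x⟫‖ ^ (2 : ℝ≥0∞).toReal) ∘ g) :=
    (summable_sq e x).comp_injective hg
  have heq : ((fun n => ‖⟪e n, x⟫‖ ^ (2 : ℝ≥0∞).toReal) ∘ g)
      = fun _ : ℕ => ‖c‖ ^ (2 : ℝ≥0∞).toReal := by
    funext j; simp [Function.comp, hc j]
  rw [heq, summable_const_iff] at hs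
  by_contra hne
  have hpos : (0:ℝ) < ‖c‖ ^ (2 : ℝ≥0∞).toReal :=
    Real.rpow_pos_of_pos (norm_pos_iff.mpr hne) _
  rw [hs] at hpos
  exact lt_irrefl 0 hpos

lemma coeff_zero_of_infinite_orbit {m : ℕ} (hm : 0 < m) {x : H} (hx : (T ^ m) x = x)
    {k : ℕ} (hk : k ∉ periodicPts ⇑σ) : ⟪e k, x⟫ = 0 := by
  have hc : ∀ n, ⟪e ((σ ^ m) n), x⟫ = ⟪e n, x⟫ := (periodic_iff e σ T hT m x).mp hx
  have hit : ∀ j : ℕ, ⟪e (((σ ^ m) ^ j) k), x⟫ = ⟪e k, x⟫ := by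
    intro j
    induction j with
    | zero => simp
    | succ j ih =>
      have hstep : ((σ ^ m) ^ (j+1)) k = (σ ^ m) (((σ ^ m) ^ j) k) := by
        rw [pow_succ' (σ ^ m) j, Equiv.Perm.mul_apply]
      rw [hstep, hc]
      exact ih
  exact const_coeff_zero e x (injective_pow_apply hm hk) hit

end Hilb

/-- For a permutation operator `T e_n = e_{σ n}`, the set of periodic points of `T` is
closed in `H` iff the cardinalities of the finite orbits of `σ` are uniformly bounded. -/
theorem permutation_periodic_points_closed_iff
    {H : Type*} [NormedAddCommGroup H] [InnerProductSpace ℂ H] [CompleteSpace H]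
    (e : HilbertBasis ℕ ℂ H) (σ : Equiv.Perm ℕ) (T : H →L[ℂ] H)
    (hT : ∀ n, T (e n) = e (σ n)) :
    IsClosed {x : H | ∃ m : ℕ, 0 < m ∧ (T ^ m) x = x}
      ↔ ∃ B : ℕ, ∀ m : ℕ, (permOrbit σ m).Finite → (permOrbit σ m).ncard ≤ B := by
  constructor
  · -- closed → bounded
    intro hclosed
    by_contra hnb
    push_neg at hnb
    have hstep : ∀ B : ℕ, ∃ k : ℕ, k ∈ periodicPts ⇑σ ∧ B < minimalPeriod ⇑σ k := by
      intro B
      obtain ⟨m, hfin, hlt⟩ := hnb B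
      have hmem := (orbit_finite_iff σ m).mp hfin
      exact ⟨m, hmem, by rwa [ncard_orbit σ m hmem] at hlt⟩
    choose F hF1 hF2 using hstep
    set n : ℕ → ℕ := fun j => Nat.rec (F 0) (fun _ prev => F (minimalPeriod ⇑σ prev)) j with hn
    set p : ℕ → ℕ := fun j => minimalPeriod ⇑σ (n j) with hp
    have hmem : ∀ j, n j ∈ periodicPts ⇑σ := by
      intro j; cases j with
      | zero => exact hF1 0
      | succ j => exact hF1 _
    have hpsucc : ∀ j, p j < p (j+1) := fun j => hF2 (p j)
    have hmono : StrictMono p := strictMono_nat_of_lt_succ hpsucc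
    have hlb : ∀ j, j < p j := by
      intro j
      induction j with
      | zero => exact hF2 0
      | succ j ih => have := hpsucc j; omega
    have hdist : ∀ i j : ℕ, i ≠ j → n i ∉ permOrbit σ (n j) := by
      intro i j hij hmemo
      have horb := orbit_eq_of_mem hmemo
      have hpij : p i = p j := by
        rw [hp]
        simp only
        rw [← ncard_orbit σ (n i) (hmem i), ← ncard_orbit σ (n j) (hmem j), horb]
      exact hij (hmono.injective hpij)
    have hninj : Function.Injective n := by
      intro i j hij
      by_contra hne
      exact hdist i j hne (hij ▸ self_mem_orbit σ (n i))
    set a : ℕ → ℂ := fun j => ((2 : ℂ)⁻¹) ^ j with ha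
    have hsummable : Summable (fun j => a j • e (n j)) := by
      apply Summable.of_norm
      have hgeo : Summable (fun j : ℕ => (2⁻¹ : ℝ) ^ j) :=
        summable_geometric_of_lt_one (by norm_num) (by norm_num)
      have heq : (fun j => ‖a j • e (n j)‖) = fun j : ℕ => (2⁻¹ : ℝ) ^ j := by
        funext j
        rw [norm_smul, e.orthonormal.1 (n j), mul_one]
        simp [ha, norm_pow]
      rw [heq]
      exact hgeo
    set x := ∑' j, a j • e (n j) with hxdef
    have hx : HasSum (fun j => a j • e (n j)) x := hsummable.hasSum
    have hkey : ∀ k, HasSum (fun j => if k = n j then a j else 0) ⟪e k, x⟫ := by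
      intro k
      have h1 := (innerSL ℂ (e k)).hasSum hx
      have h2 : (fun j => (innerSL ℂ (e k)) (a j • e (n j)))
          = fun j => if k = n j then a j else 0 := by
        funext j
        rw [innerSL_apply_apply, inner_smul_right, orthonormal_iff_ite.mp e.orthonormal]
        by_cases h : k = n j <;> simp [h]
      rw [h2] at h1
      exact h1
    have hc1 : ∀ j0, ⟪e (n j0), x⟫ = a j0 := by
      intro j0
      refine (hkey (n j0)).unique ?_
      have h2 : (fun j => if n j0 = n j then a j else 0)
          = (fun j : ℕ => if j = j0 then a j0 else 0) := by
        funext j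
        by_cases h : j = j0
        · subst h; simp
        · have hne : n j0 ≠ n j := fun hh => h (hninj hh.symm)
          simp [h, hne]
      rw [h2]
      exact hasSum_ite_eq j0 (a j0)
    have hc0 : ∀ k, (∀ j, k ≠ n j) → ⟪e k, x⟫ = 0 := by
      intro k hk
      have h1 := hkey k
      have h2 : (fun j => if k = n j then a j else 0) = fun _ : ℕ => (0:ℂ) :=
        funext fun j => if_neg (hk j)
      rw [h2] at h1
      exact h1.unique hasSum_zero
    have hnotper : ∀ m, 0 < m → (T ^ m) x ≠ x := by
      intro m hm hper
      rw [periodic_iff e σ T hT] at hper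
      have h1 := hper (n m)
      have h3 : ∀ j, (σ ^ m) (n m) ≠ n j := by
        intro j hj
        by_cases h : j = m
        · rw [h] at hj
          have hpp : Function.IsPeriodicPt ⇑σ m (n m) := by
            show (⇑σ)^[m] (n m) = n m
            rw [Equiv.Perm.iterate_eq_pow]
            exact hj
          have hdvd := hpp.minimalPeriod_dvd
          have hle2 : p m ≤ m := Nat.le_of_dvd hm hdvd
          have := hlb m
          omega
        · refine hdist j m h ?_
          exact ⟨(m : ℤ), by rw [zpow_natCast]; exact hj⟩
      rw [hc0 _ h3, hc1 m] at h1
      exact (pow_ne_zero m (by norm_num : (2:ℂ)⁻¹ ≠ 0)) h1.symm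
    have hmemP : ∀ N : ℕ,
        (∑ j ∈ Finset.range N, a j • e (n j)) ∈ {y : H | ∃ m, 0 < m ∧ (T ^ m) y = y} := by
      intro N
      set M := ∏ j ∈ Finset.range N, p j with hM
      have hMpos : 0 < M :=
        Finset.prod_pos (fun j _ => lt_of_le_of_lt (Nat.zero_le j) (hlb j))
      refine ⟨M, hMpos, ?_⟩
      rw [periodic_iff e σ T hT]
      intro k
      have hfix : ∀ j ∈ Finset.range N, (σ ^ M) (n j) = n j := by
        intro j hj
        have hdvd : p j ∣ M := Finset.dvd_prod_of_mem p hj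
        have hpp : Function.IsPeriodicPt ⇑σ M (n j) :=
          (Function.isPeriodicPt_minimalPeriod ⇑σ (n j)).trans_dvd hdvd
        exact hpp
      have hcoeff : ∀ k' : ℕ, ⟪e k', ∑ j ∈ Finset.range N, a j • e (n j)⟫
          = ∑ j ∈ Finset.range N, if k' = n j then a j else 0 := by
        intro k'
        rw [inner_sum]
        refine Finset.sum_congr rfl fun j _ => ?_
        rw [inner_smul_right, orthonormal_iff_ite.mp e.orthonormal]
        by_cases h : k' = n j <;> simp [h]
      rw [hcoeff, hcoeff]
      by_cases hk : (σ ^ M) k = k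
      · rw [hk]
      · have hL : (∑ j ∈ Finset.range N, if (σ ^ M) k = n j then a j else 0) = 0 := by
          refine Finset.sum_eq_zero fun j hj => ?_
          refine if_neg fun hkj => hk ?_
          have h4 : (σ ^ M) k = (σ ^ M) (n j) := by rw [hfix j hj]; exact hkj
          have h5 := (Equiv.injective _) h4
          rw [h5]
          exact hfix j hj
        have hR : (∑ j ∈ Finset.range N, if k = n j then a j else 0) = 0 := by
          refine Finset.sum_eq_zero fun j hj => ?_
          refine if_neg fun hkj => hk ?_
          rw [hkj]
          exact hfix j hj
        rw [hL, hR]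
    have hxmem : x ∈ {y : H | ∃ m, 0 < m ∧ (T ^ m) y = y} :=
      hclosed.mem_of_tendsto hx.tendsto_sum_nat (Filter.Eventually.of_forall hmemP)
    obtain ⟨m, hm, hper⟩ := hxmem
    exact hnotper m hm hper
  · rintro ⟨B, hB⟩
    have hset : {x : H | ∃ m : ℕ, 0 < m ∧ (T ^ m) x = x}
        = {x : H | (T ^ (B.factorial)) x = x} := by
      ext x
      simp only [Set.mem_setOf_eq]
      constructor
      · rintro ⟨m, hm, hx⟩
        rw [periodic_iff e σ T hT]
        intro k
        by_cases hk : k ∈ periodicPts ⇑σ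
        · have hfin := (orbit_finite_iff σ k).mpr hk
          have hple : minimalPeriod ⇑σ k ≤ B := by
            have h6 := hB k hfin
            rwa [ncard_orbit σ k hk] at h6
          have hdvd : minimalPeriod ⇑σ k ∣ B.factorial :=
            Nat.dvd_factorial (minimalPeriod_pos_of_mem_periodicPts hk) hple
          have hfix : (σ ^ B.factorial) k = k :=
            (Function.isPeriodicPt_minimalPeriod ⇑σ k).trans_dvd hdvd
          rw [hfix]
        · have h1 : ⟪e k, x⟫ = 0 := coeff_zero_of_infinite_orbit e σ T hT hm hx hk
          have h2 : ⟪e ((σ ^ B.factorial) k), x⟫ = 0 :=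
            coeff_zero_of_infinite_orbit e σ T hT hm hx (not_periodicPts_pow_apply _ hk)
          rw [h1, h2]
      · intro hx
        exact ⟨B.factorial, B.factorial_pos, hx⟩
    rw [hset]
    exact isClosed_eq (T ^ B.factorial).continuous continuous_id
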